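/- Let N = p_1^{α_1}···p_r^{α_r} with the p_i distinct primes and α_i ≥ 1, and let k = a·p_1^{β_1}···p_r^{β_r} where 1 ≤ β_i ≤ α_i for all i and a is an integer divisible by none of the p_i. Then the smallest positive integer t such that the product of t copies of [[k, -1], [1, 0]] over Z/NZ equals ± Id is t = 2·p_1^{α_1-β_1}···p_r^{α_r-β_r}. In particular, for N = l^n with l, n ≥ 2 and k = l, this minimal size is 2·l^{n-1}. -/

import Mathlib

open Matrix Finset

namespace Stmt19

lemma aux3 (v : ℕ) (hv : 1 ≤ v) : v + 2 ≤ 3 ^ v := by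
  induction v with
  | zero => omega
  | succ w ih =>
    rcases Nat.eq_zero_or_pos w with h | h
    · subst h; norm_num
    · have h1 := ih h
      have h2 : 0 < 3 ^ w := pow_pos (by norm_num) _
      have h3 : 3 ^ (w+1) = 3 ^ w + 3 ^ w * 2 := by ring
      omega

lemma val_le (q v j : ℕ) (hq : 2 ≤ q) (hj : 1 ≤ j) (h : q ^ v ∣ j) : v + 1 ≤ j := by
  have h1 : q ^ v ≤ j := Nat.le_of_dvd hj h
  have h2 : 2 ^ v ≤ q ^ v := Nat.pow_le_pow_left hq v
  have h3 : v < 2 ^ v := Nat.lt_two_pow_self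
  omega

lemma choose_val (q e s j : ℕ) (hq : q.Prime) (hse : q ^ e ∣ s) (hj : 1 ≤ j) (hjs : j ≤ s) :
    q ^ e ∣ s.choose j * q ^ (j.factorization q) := by
  set v := j.factorization q with hv
  have hvd : q ^ v ∣ j := Nat.ordProj_dvd j q
  obtain ⟨j', hj'⟩ := hvd
  have hj'pos : 0 < j' := Nat.pos_of_ne_zero (fun h0 => by simp [h0] at hj'; omega)
  have hcop : Nat.Coprime q j' := by
    by_contra hc
    have hd : q ∣ j' := (Nat.Prime.coprime_iff_not_dvd hq).not_left.mp (by simpa using hc)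
    have hd2 : q ^ (v + 1) ∣ j := by
      rw [hj', pow_succ]
      exact Nat.mul_dvd_mul dvd_rfl hd
    have := (Nat.Prime.pow_dvd_iff_le_factorization hq (by omega : j ≠ 0)).mp hd2
    omega
  have hid : s.choose j * j = s * (s-1).choose (j-1) := by
    obtain ⟨s', rfl⟩ : ∃ s', s = s' + 1 := ⟨s - 1, by omega⟩
    obtain ⟨j'', rfl⟩ : ∃ j'', j = j'' + 1 := ⟨j - 1, by omega⟩
    simpa [Nat.succ_sub_one, mul_comm] using (Nat.add_one_mul_choose_eq s' j'').symm
  have h1 : q ^ e ∣ s.choose j * q ^ v * j' := by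
    calc q ^ e ∣ s := hse
    _ ∣ s * (s-1).choose (j-1) := Dvd.intro _ rfl
    _ = s.choose j * j := hid.symm
    _ = s.choose j * q ^ v * j' := by rw [hj', mul_assoc]
  exact Nat.Coprime.dvd_of_dvd_mul_right
    (Nat.Coprime.pow_left e hcop) h1

lemma A_nat (q β e s j : ℕ) (hq : q.Prime) (hβ : 1 ≤ β) (hse : q ^ e ∣ s)
    (hj : 1 ≤ j) (hjs : j ≤ s) : q ^ (β + e) ∣ s.choose j * q ^ (β * j) := by
  set v := j.factorization q with hv
  have h1 : q ^ e ∣ s.choose j * q ^ v := choose_val q e s j hq hse hj hjs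
  have h2 : v + 1 ≤ j := val_le q v j hq.two_le hj (Nat.ordProj_dvd j q)
  obtain ⟨j'', rfl⟩ : ∃ j'', j = j'' + 1 := ⟨j - 1, by omega⟩
  have h3 : j'' ≤ β * j'' := Nat.le_mul_of_pos_left j'' hβ
  have h4 : v ≤ β * (j'' + 1) - β := by
    have : β * (j''+1) = β * j'' + β := by ring
    omega
  have h5 : β * (j''+1) = v + (β + (β * (j''+1) - v - β)) := by
    have : β * (j''+1) = β * j'' + β := by ring
    omega
  have hB : β ≤ β * (j''+1) := Nat.le_mul_of_pos_right β (by omega)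
  have hpow : q ^ v * (q ^ β * q ^ (β * (j''+1) - v - β)) = q ^ (β * (j''+1)) := by
    rw [← pow_add, ← pow_add]
    congr 1
    omega
  calc q ^ (β + e) = q ^ e * q ^ β := by rw [← pow_add]; ring_nf
  _ ∣ (s.choose (j''+1) * q ^ v) * (q ^ β * q ^ (β * (j''+1) - v - β)) :=
      mul_dvd_mul h1 (Dvd.intro _ rfl)
  _ = s.choose (j''+1) * q ^ (β * (j''+1)) := by
      rw [← hpow]; ring

lemma A_int (q β e s j : ℕ) (hq : q.Prime) (hβ : 1 ≤ β) (hse : q ^ e ∣ s)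
    (hj : 1 ≤ j) (hjs : j ≤ s) (k : ℤ) (hk : (q:ℤ) ^ β ∣ k) :
    (q:ℤ) ^ (β + e) ∣ (s.choose j : ℤ) * k ^ j := by
  obtain ⟨c, rfl⟩ := hk
  have h1 : ((q:ℤ)) ^ (β+e) ∣ ((s.choose j * q ^ (β * j) : ℕ) : ℤ) := by
    exact_mod_cast Int.natCast_dvd_natCast.mpr (A_nat q β e s j hq hβ hse hj hjs)
  have h2 : (s.choose j : ℤ) * ((q:ℤ)^β * c) ^ j
      = ((s.choose j * q ^ (β * j) : ℕ) : ℤ) * c ^ j := by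
    push_cast
    rw [mul_pow, ← pow_mul]
    ring
  rw [h2]
  exact h1.mul_right _

lemma B_int (q β e j : ℕ) (hq : q.Prime) (hβ : 1 ≤ β) (he : 1 ≤ e)
    (hj : 2 ≤ j) (hjs : j ≤ q ^ (e-1)) (k u : ℤ) (hk : (q:ℤ) ^ β ∣ k)
    (hu : Even j → (q:ℤ) ^ β ∣ u) :
    (q:ℤ) ^ (β + e) ∣ ((q ^ (e-1)).choose j : ℤ) * k ^ j * u := by
  set v := j.factorization q with hv
  set C := (q ^ (e-1)).choose j with hC
  have h1 : q ^ (e-1) ∣ C * q ^ v := choose_val q (e-1) (q ^ (e-1)) j hq dvd_rfl (by omega) hjs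
  have h1Z : (q:ℤ) ^ (e-1) ∣ (C:ℤ) * (q:ℤ) ^ v := by exact_mod_cast Int.natCast_dvd_natCast.mpr h1
  have h2 : v + 1 ≤ j := val_le q v j hq.two_le (by omega) (Nat.ordProj_dvd j q)
  obtain ⟨c, rfl⟩ := hk
  have hkj : ((q:ℤ) ^ β * c) ^ j = (q:ℤ) ^ (β * j) * c ^ j := by
    rw [mul_pow, ← pow_mul]
  rcases Nat.even_or_odd j with hpar | hpar
  · -- even case
    obtain ⟨u', rfl⟩ := hu hpar
    have hvj : v + 1 ≤ β * j := by
      have : j ≤ β * j := Nat.le_mul_of_pos_left j hβ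
      omega
    have hsplit : (q:ℤ) ^ (β * j) = (q:ℤ) ^ v * (q:ℤ) ^ 1 * (q:ℤ) ^ (β * j - v - 1) := by
      rw [← pow_add, ← pow_add]; congr 1; omega
    have hexp : (C:ℤ) * ((q:ℤ) ^ β * c) ^ j * ((q:ℤ) ^ β * u')
        = ((C:ℤ) * (q:ℤ) ^ v * ((q:ℤ) ^ 1 * (q:ℤ) ^ β)) * ((q:ℤ) ^ (β * j - v - 1) * c ^ j * u') := by
      rw [hkj, hsplit]; ring
    rw [hexp]
    refine Dvd.dvd.mul_right ?_ _
    have hq1 : (q:ℤ) ^ (β + e) = (q:ℤ) ^ (e-1) * ((q:ℤ) ^ 1 * (q:ℤ) ^ β) := by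
      rw [← pow_add, ← pow_add]; congr 1; omega
    rw [hq1]
    exact mul_dvd_mul h1Z dvd_rfl
  · -- odd case
    have hqv : q ^ v ∣ j := Nat.ordProj_dvd j q
    have hvj : v + β + 1 ≤ β * j := by
      rcases Nat.eq_zero_or_pos v with h0 | h0
      · have : β * 2 ≤ β * j := Nat.mul_le_mul_left β hj
        omega
      · have hq3 : 3 ≤ q := by
          by_contra hcon
          push_neg at hcon
          have h2le := hq.two_le
          have hq2 : q = 2 := by omega
          subst hq2
          have h2j : 2 ∣ j := dvd_trans (dvd_pow_self 2 (by omega)) hqv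
          exact (Nat.not_even_iff_odd.mpr hpar) (even_iff_two_dvd.mpr h2j)
        have h3v : 3 ^ v ≤ q ^ v := Nat.pow_le_pow_left hq3 v
        have hqvle : q ^ v ≤ j := Nat.le_of_dvd (by omega) hqv
        have haux := aux3 v h0
        -- j ≥ v + 2
        have hj2 : v + 2 ≤ j := by omega
        have hm : β * (v + 2) ≤ β * j := Nat.mul_le_mul_left β hj2
        have hm2 : β * (v + 2) = β * v + 2 * β := by ring
        have hm3 : v ≤ β * v := Nat.le_mul_of_pos_left v hβ
        omega
    have hsplit : (q:ℤ) ^ (β * j) = (q:ℤ) ^ v * (q:ℤ) ^ (β + 1) * (q:ℤ) ^ (β * j - v - (β+1)) := by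
      rw [← pow_add, ← pow_add]; congr 1; omega
    have hexp : (C:ℤ) * ((q:ℤ) ^ β * c) ^ j * u
        = ((C:ℤ) * (q:ℤ) ^ v * (q:ℤ) ^ (β + 1)) * ((q:ℤ) ^ (β * j - v - (β+1)) * c ^ j * u) := by
      rw [hkj, hsplit]; ring
    rw [hexp]
    refine Dvd.dvd.mul_right ?_ _
    have hq1 : (q:ℤ) ^ (β + e) = (q:ℤ) ^ (e-1) * (q:ℤ) ^ (β + 1) := by
      rw [← pow_add]; congr 1; omega
    rw [hq1]
    exact mul_dvd_mul h1Z dvd_rfl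

variable {R : Type*} [CommRing R]

lemma binom_pow (M : Matrix (Fin 2) (Fin 2) R) (c : R) (n : ℕ) :
    (1 + c • M) ^ n = ∑ j ∈ range (n + 1), (n.choose j : R) • (c ^ j • M ^ j) := by
  have hc : Commute (c • M) (1 : Matrix (Fin 2) (Fin 2) R) := Commute.one_right _
  have h := hc.add_pow n
  rw [add_comm] at h
  rw [h]
  refine Finset.sum_congr rfl fun j hj => ?_
  rw [one_pow, mul_one, smul_pow, ← (Nat.cast_commute (n.choose j)
    (c ^ j • M ^ j : Matrix (Fin 2) (Fin 2) R)).eq, ← nsmul_eq_mul, ← Nat.cast_smul_eq_nsmul R]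

lemma binom_pow_entry (M : Matrix (Fin 2) (Fin 2) R) (c : R) (n : ℕ) (i i' : Fin 2) :
    ((1 + c • M) ^ n) i i' = ∑ j ∈ range (n + 1), (n.choose j : R) * c ^ j * (M ^ j) i i' := by
  rw [binom_pow, Matrix.sum_apply]
  refine Finset.sum_congr rfl fun j hj => ?_
  simp [Matrix.smul_apply, mul_assoc]

lemma Mk_sq (c : R) :
    (!![c, -1; 1, 0] : Matrix (Fin 2) (Fin 2) R) ^ 2
      = -(1 + (-c) • !![c, -1; 1, 0]) := by
  rw [pow_two, Matrix.mul_fin_two]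
  ext i j
  fin_cases i <;> fin_cases j <;>
    simp [Matrix.smul_apply, Matrix.one_apply] <;> ring

def Amat (k : ℤ) : Matrix (Fin 2) (Fin 2) ℤ := !![k, -1; 1, 0]

def Mmat (d : ℕ) (k : ℤ) : Matrix (Fin 2) (Fin 2) (ZMod d) := !![(k : ZMod d), -1; 1, 0]

lemma Mmat_eq_map (d : ℕ) (k : ℤ) :
    Mmat d k = (Int.castRingHom (ZMod d)).mapMatrix (Amat k) := by
  ext i j
  fin_cases i <;> fin_cases j <;>
    simp [Mmat, Amat, RingHom.mapMatrix_apply, Matrix.map_apply]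

lemma Mmat_pow_entry (d : ℕ) (k : ℤ) (t : ℕ) (i i' : Fin 2) :
    (Mmat d k ^ t) i i' = (((Amat k ^ t) i i' : ℤ) : ZMod d) := by
  rw [Mmat_eq_map, ← map_pow]
  simp [RingHom.mapMatrix_apply, Matrix.map_apply]

lemma Mmat_sq (d : ℕ) (k : ℤ) :
    Mmat d k ^ 2 = -(1 + (-((k : ℤ) : ZMod d)) • Mmat d k) := Mk_sq _

-- even power entry divisibility
lemma even_entry (d : ℕ) (k : ℤ) (hk : (d:ℤ) ∣ k) (j : ℕ) (hj : Even j) :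
    (d:ℤ) ∣ (Amat k ^ j) 1 0 := by
  obtain ⟨i, rfl⟩ := hj
  rw [← ZMod.intCast_zmod_eq_zero_iff_dvd, ← Mmat_pow_entry]
  have hk0 : ((k : ℤ) : ZMod d) = 0 := (ZMod.intCast_zmod_eq_zero_iff_dvd k d).mpr hk
  have hMsq : Mmat d k ^ 2 = -1 := by
    rw [Mmat_sq, hk0]
    simp
  have : Mmat d k ^ (i + i) = (-1 : Matrix (Fin 2) (Fin 2) (ZMod d)) ^ i := by
    rw [← two_mul, pow_mul, hMsq]
  rw [this]
  rcases Nat.even_or_odd i with h | h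
  · rw [h.neg_one_pow]
    simp [Matrix.one_apply]
  · rw [h.neg_one_pow]
    simp [Matrix.one_apply]

lemma Zpow_entry (d : ℕ) (k : ℤ) (n : ℕ) (i i' : Fin 2) :
    ((1 + (-((k : ℤ) : ZMod d)) • Mmat d k) ^ n) i i' =
      ((∑ j ∈ range (n + 1), (n.choose j : ℤ) * (-k) ^ j * ((Amat k ^ j) i i') : ℤ) : ZMod d) := by
  rw [binom_pow_entry]
  push_cast
  refine Finset.sum_congr rfl fun j hj => ?_
  rw [Mmat_pow_entry]

lemma one_entry_cast (d : ℕ) (i i' : Fin 2) :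
    (1 : Matrix (Fin 2) (Fin 2) (ZMod d)) i i'
      = (((1 : Matrix (Fin 2) (Fin 2) ℤ) i i' : ℤ) : ZMod d) := by
  simp only [Matrix.one_apply]
  split <;> simp

lemma Zpow_eq_one (d : ℕ) (k : ℤ) (n : ℕ)
    (hcoef : ∀ j, 1 ≤ j → j ≤ n → (d:ℤ) ∣ (n.choose j : ℤ) * k ^ j) :
    (1 + (-((k : ℤ) : ZMod d)) • Mmat d k) ^ n = 1 := by
  ext i i'
  rw [Zpow_entry, one_entry_cast, ZMod.intCast_eq_intCast_iff, Int.modEq_iff_dvd]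
  rw [Finset.sum_range_succ']
  simp only [Nat.choose_zero_right, pow_zero, one_mul, Nat.cast_one]
  rw [add_comm, sub_add_eq_sub_sub, sub_self, zero_sub, dvd_neg]
  refine Finset.dvd_sum fun j hj => ?_
  have h1 : ((n.choose (j+1) : ℤ)) * (-k) ^ (j+1) * ((Amat k ^ (j+1)) i i')
      = ((n.choose (j+1) : ℤ) * k ^ (j+1)) * ((-1) ^ (j+1) * ((Amat k ^ (j+1)) i i')) := by
    rw [neg_pow]; ring
  rw [h1]
  exact (hcoef (j+1) (by omega) (by simp at hj; omega)).mul_right _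

lemma Mmat_pow_two_mul (d : ℕ) (k : ℤ) (s : ℕ) :
    Mmat d k ^ (2 * s)
      = (-1) ^ s * (1 + (-((k : ℤ) : ZMod d)) • Mmat d k) ^ s := by
  rw [pow_mul, Mmat_sq, neg_pow]

lemma upper_bound (d : ℕ) (k : ℤ) (m : ℕ)
    (hcoef : ∀ j, 1 ≤ j → j ≤ m → (d:ℤ) ∣ (m.choose j : ℤ) * k ^ j) :
    Mmat d k ^ (2 * m) = 1 ∨ Mmat d k ^ (2 * m) = -1 := by
  rw [Mmat_pow_two_mul, Zpow_eq_one d k m hcoef, mul_one]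
  rcases Nat.even_or_odd m with h | h
  · left; exact h.neg_one_pow
  · right; exact h.neg_one_pow

lemma per_prime (q β e : ℕ) (hq : q.Prime) (hβ : 1 ≤ β) (he : 1 ≤ e) (k : ℤ)
    (hk : (q:ℤ) ^ β ∣ k) (hk2 : ¬ (q:ℤ) ^ (β+1) ∣ k) (s : ℕ)
    (h : Mmat (q^(β+e)) k ^ (2*s) = 1 ∨ Mmat (q^(β+e)) k ^ (2*s) = -1) :
    q ^ e ∣ s := by
  set d := q ^ (β + e) with hd
  have hdz : (d:ℤ) = (q:ℤ) ^ (β + e) := by push_cast [hd]; ring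
  set Z := (1 + (-((k : ℤ) : ZMod d)) • Mmat d k) with hZ
  have hsplit := Mmat_pow_two_mul d k s
  have hZs : Z ^ s = 1 ∨ Z ^ s = -1 := by
    rcases Nat.even_or_odd s with hs | hs
    · rw [hsplit, hs.neg_one_pow, one_mul] at h
      exact h
    · rw [hsplit, hs.neg_one_pow, neg_one_mul] at h
      rcases h with h | h
      · right; rw [hZ]; exact neg_eq_iff_eq_neg.mp h
      · left; rw [hZ]; exact neg_inj.mp h
  -- exclude Z^s = -1
  have hne : Z ^ s ≠ -1 := by
    intro hcon
    have hent := Zpow_entry d k s 0 0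
    set S := ∑ j ∈ range (s + 1), (s.choose j : ℤ) * (-k) ^ j * ((Amat k ^ j) 0 0) with hS
    -- k^2 ∣ S - 1
    have hkS : k ^ 2 ∣ S - 1 := by
      have hpeel : S = ((s.choose 0 : ℤ) * (-k) ^ 0 * ((Amat k ^ 0) 0 0))
          + ∑ j ∈ Finset.Ico 1 (s + 1), (s.choose j : ℤ) * (-k) ^ j * ((Amat k ^ j) 0 0) := by
        rw [hS, Finset.range_eq_Ico, Finset.sum_eq_sum_Ico_succ_bot (by omega)]
      have h00 : (Amat k ^ 0) 0 0 = 1 := by rw [pow_zero]; simp [Matrix.one_apply]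
      rw [hpeel, h00]
      simp only [Nat.choose_zero_right, pow_zero, one_mul, mul_one, Nat.cast_one]
      rw [add_comm, add_sub_cancel_right]
      refine Finset.dvd_sum fun j hj => ?_
      simp only [Finset.mem_Ico] at hj
      rcases eq_or_lt_of_le hj.1 with h1 | h1
      · have hA1 : (Amat k ^ 1) 0 0 = k := by rw [pow_one]; simp [Amat]
        rw [← h1, hA1]
        exact ⟨-(s.choose 1 : ℤ), by ring⟩
      · obtain ⟨j', rfl⟩ : ∃ j', j = j' + 2 := ⟨j - 2, by omega⟩
        have hksplit : (-k) ^ (j' + 2) = k ^ 2 * ((-1) ^ (j'+2) * k ^ j') := by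
          rw [neg_pow]; ring
        rw [hksplit]
        exact ⟨(s.choose (j'+2) : ℤ) * ((-1) ^ (j'+2) * k ^ j') * ((Amat k ^ (j'+2)) 0 0), by ring⟩
    -- d ∣ S + 1
    have hdS : (d:ℤ) ∣ S + 1 := by
      have hval : ((S : ℤ) : ZMod d) = ((-1 : ℤ) : ZMod d) := by
        rw [← hent, hcon]
        simp
      rw [ZMod.intCast_eq_intCast_iff, Int.modEq_iff_dvd] at hval
      have : (-1 : ℤ) - S = -(S + 1) := by ring
      rw [this, dvd_neg] at hval
      exact hval
    have hqk : (q:ℤ) ∣ k := dvd_trans (dvd_pow_self (q:ℤ) (by omega)) hk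
    by_cases hq2 : q = 2
    · subst hq2
      have hβe2 : 2 ≤ β + e := by omega
      have h4d : (4:ℤ) ∣ (d:ℤ) := by
        rw [hdz]
        calc (4:ℤ) = (2:ℤ)^2 := by norm_num
        _ ∣ ((2:ℕ):ℤ) ^ (β+e) := by push_cast; exact pow_dvd_pow 2 hβe2
      obtain ⟨c, rfl⟩ := hqk
      have h4k : (4:ℤ) ∣ (((2:ℕ):ℤ) * c) ^ 2 := ⟨c^2, by push_cast; ring⟩
      have h2 : (4:ℤ) ∣ 2 := by
        have hx := dvd_sub (h4d.trans hdS) (h4k.trans hkS)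
        have : (S + 1) - (S - 1) = 2 := by ring
        rwa [this] at hx
      have := Int.le_of_dvd (by norm_num) h2
      omega
    · have hqd : (q:ℤ) ∣ (d:ℤ) := by
        rw [hdz]; exact dvd_pow_self _ (by omega)
      have h2 : (q:ℤ) ∣ 2 := by
        have hqk2 : (q:ℤ) ∣ k ^ 2 := hqk.trans (dvd_pow_self k (by norm_num))
        have hx := dvd_sub (hqd.trans hdS) (hqk2.trans hkS)
        have : (S + 1) - (S - 1) = 2 := by ring
        rwa [this] at hx
      have h2' : q ∣ 2 := by exact_mod_cast h2
      have := Nat.le_of_dvd (by norm_num) h2'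
      have := hq.two_le
      omega
  have hZ1 : Z ^ s = 1 := hZs.resolve_right hne
  -- Z ^ (q^e) = 1
  have hZq : Z ^ (q ^ e) = 1 := by
    refine Zpow_eq_one d k (q^e) fun j hj1 hj2 => ?_
    rw [hdz]
    exact A_int q β e (q^e) j hq hβ dvd_rfl hj1 hj2 k hk
  -- Z ^ (q^(e-1)) ≠ 1
  have hne2 : Z ^ (q ^ (e-1)) ≠ 1 := by
    intro hcon
    obtain ⟨m'', hm''⟩ : ∃ m'', q ^ (e-1) = m'' + 1 :=
      ⟨q ^ (e-1) - 1, by have := Nat.one_le_two_pow (n := e-1); have : 0 < q ^ (e-1) := pow_pos hq.pos _; omega⟩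
    have hent := Zpow_entry d k (q ^ (e-1)) 1 0
    set m' := q ^ (e-1) with hm'
    set S' := ∑ j ∈ range (m' + 1), (m'.choose j : ℤ) * (-k) ^ j * ((Amat k ^ j) 1 0) with hS'
    have hdS' : (d:ℤ) ∣ S' := by
      have hval : ((S' : ℤ) : ZMod d) = ((0 : ℤ) : ZMod d) := by
        rw [← hent, hcon]
        simp [Matrix.one_apply]
      rw [ZMod.intCast_eq_intCast_iff, Int.modEq_iff_dvd, zero_sub, dvd_neg] at hval
      exact hval
    -- d ∣ S' + m' * k
    have hdS2 : (d:ℤ) ∣ S' + (m' : ℤ) * k := by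
      have hg0 : ((m'.choose 0 : ℤ)) * (-k) ^ 0 * ((Amat k ^ 0) 1 0) = 0 := by
        rw [pow_zero]
        simp [Matrix.one_apply]
      have hg1 : ((m'.choose 1 : ℤ)) * (-k) ^ 1 * ((Amat k ^ 1) 1 0) = -((m' : ℤ) * k) := by
        rw [pow_one, pow_one]
        have hA : (Amat k) 1 0 = 1 := by simp [Amat]
        rw [hA, Nat.choose_one_right]
        ring
      have hm'2 : 1 < m' + 1 := by
        have : 0 < q ^ (e-1) := pow_pos hq.pos _
        omega
      have hpeel : S' = ((m'.choose 0 : ℤ) * (-k) ^ 0 * ((Amat k ^ 0) 1 0))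
          + (((m'.choose 1 : ℤ)) * (-k) ^ 1 * ((Amat k ^ 1) 1 0)
          + ∑ j ∈ Finset.Ico 2 (m' + 1), (m'.choose j : ℤ) * (-k) ^ j * ((Amat k ^ j) 1 0)) := by
        rw [hS', Finset.range_eq_Ico, Finset.sum_eq_sum_Ico_succ_bot (by omega),
          Finset.sum_eq_sum_Ico_succ_bot hm'2]
      rw [hpeel, hg0, hg1]
      have hcollapse : 0 + (-((m' : ℤ) * k) + ∑ j ∈ Finset.Ico 2 (m' + 1), (m'.choose j : ℤ) * (-k) ^ j * ((Amat k ^ j) 1 0)) + (m' : ℤ) * k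
          = ∑ j ∈ Finset.Ico 2 (m' + 1), (m'.choose j : ℤ) * (-k) ^ j * ((Amat k ^ j) 1 0) := by
        ring
      rw [hcollapse]
      refine Finset.dvd_sum fun j hj => ?_
      simp only [Finset.mem_Ico] at hj
      have hb := B_int q β e j hq hβ he (by omega) (by rw [← hm']; omega) k ((Amat k ^ j) 1 0) hk
        (fun hev => by
          have hx := even_entry (q ^ β) k (by push_cast; exact hk) j hev
          push_cast at hx
          exact hx)
      rw [hdz]
      have hsign : (m'.choose j : ℤ) * (-k) ^ j * ((Amat k ^ j) 1 0)
          = (((q ^ (e-1)).choose j : ℤ) * k ^ j * ((Amat k ^ j) 1 0)) * (-1) ^ j := by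
        rw [neg_pow, hm']
        ring
      rw [hsign]
      exact Dvd.dvd.mul_right hb _
    have hdmk : (d:ℤ) ∣ (m' : ℤ) * k := by
      have hx := dvd_sub hdS2 hdS'
      simpa using hx
    have hm'c : ((m' : ℕ) : ℤ) = (q:ℤ) ^ (e-1) := by rw [hm']; push_cast; ring
    have hsplitq : (q:ℤ) ^ (β+e) = (q:ℤ) ^ (e-1) * (q:ℤ) ^ (β+1) := by
      rw [← pow_add]; congr 1; omega
    rw [hdz, hsplitq, hm'c] at hdmk
    have hqe0 : ((q:ℤ)) ^ (e-1) ≠ 0 := pow_ne_zero _ (by exact_mod_cast hq.pos.ne')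
    exact hk2 ((mul_dvd_mul_iff_left hqe0).mp hdmk)
  have hord : orderOf Z ∣ q ^ e := orderOf_dvd_of_pow_eq_one hZq
  obtain ⟨c, hce, hc⟩ := (Nat.dvd_prime_pow hq).mp hord
  have hc_e : c = e := by
    by_contra hcon
    have hcle : c ≤ e - 1 := by omega
    have : Z ^ (q ^ (e-1)) = 1 := by
      apply orderOf_dvd_iff_pow_eq_one.mp
      rw [hc]
      exact pow_dvd_pow q hcle
    exact hne2 this
  rw [← hc_e, ← hc]
  exact orderOf_dvd_of_pow_eq_one hZ1

lemma transfer (dN d : ℕ) (hd : d ∣ dN) (k : ℤ) (t : ℕ)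
    (h : Mmat dN k ^ t = 1 ∨ Mmat dN k ^ t = -1) :
    Mmat d k ^ t = 1 ∨ Mmat d k ^ t = -1 := by
  have hmap : (ZMod.castHom hd (ZMod d)).mapMatrix (Mmat dN k) = Mmat d k := by
    rw [Mmat_eq_map, Mmat_eq_map, ← RingHom.comp_apply, RingHom.mapMatrix_comp,
      RingHom.ext_int ((ZMod.castHom hd (ZMod d)).comp (Int.castRingHom (ZMod dN)))
        (Int.castRingHom (ZMod d))]
  rcases h with h | h
  · left; rw [← hmap, ← map_pow, h, _root_.map_one]
  · right; rw [← hmap, ← map_pow, h, map_neg, _root_.map_one]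

lemma even_t (d : ℕ) (hd : 2 ≤ d) (k : ℤ) (hk : (d:ℤ) ∣ k) (t : ℕ)
    (h : Mmat d k ^ t = 1 ∨ Mmat d k ^ t = -1) : Even t := by
  by_contra hodd
  rw [Nat.not_even_iff_odd] at hodd
  obtain ⟨i, rfl⟩ := hodd
  have hk0 : ((k:ℤ) : ZMod d) = 0 := (ZMod.intCast_zmod_eq_zero_iff_dvd k d).mpr hk
  have hsq : Mmat d k ^ 2 = -1 := by
    rw [Mmat_sq, hk0]
    simp
  have hpow : Mmat d k ^ (2*i+1) = (-1)^i * Mmat d k := by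
    rw [pow_succ, pow_mul, hsq]
  have hM : Mmat d k = 1 ∨ Mmat d k = -1 := by
    rcases Nat.even_or_odd i with hi | hi
    · rw [hpow, hi.neg_one_pow, one_mul] at h
      exact h
    · rw [hpow, hi.neg_one_pow, neg_one_mul] at h
      rcases h with h | h
      · right; exact neg_eq_iff_eq_neg.mp h
      · left; exact neg_inj.mp h
  have h01 : Mmat d k 0 1 = 0 := by
    rcases hM with h | h <;> rw [h] <;> simp [Matrix.one_apply]
  have : ((-1 : ℤ) : ZMod d) = 0 := by
    rw [← h01]
    simp [Mmat]
  rw [ZMod.intCast_zmod_eq_zero_iff_dvd] at this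
  rw [dvd_neg] at this
  have := Int.le_of_dvd (by norm_num) this
  omega

theorem part1 (r : ℕ) (hr : 1 ≤ r) (p α β : Fin r → ℕ) (hp : ∀ i, (p i).Prime)
    (hinj : Function.Injective p) (hβ1 : ∀ i, 1 ≤ β i) (hβα : ∀ i, β i ≤ α i)
    (a : ℤ) (ha : ∀ i, ¬((p i : ℤ) ∣ a)) (N : ℕ) (hN : N = ∏ i, p i ^ α i)
    (k : ℤ) (hk : k = a * ∏ i, (p i : ℤ) ^ β i) :
    IsLeast {t : ℕ | 0 < t ∧ (Mmat N k ^ t = 1 ∨ Mmat N k ^ t = -1)}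
      (2 * ∏ i, p i ^ (α i - β i)) := by
  set m := ∏ i, p i ^ (α i - β i) with hm
  have hpz : ∀ i, Prime (p i : ℤ) := fun i => Nat.prime_iff_prime_int.mp (hp i)
  have hkdvd : ∀ i, (p i : ℤ) ^ (β i) ∣ k := by
    intro i
    rw [hk]
    exact Dvd.dvd.mul_left (Finset.dvd_prod_of_mem _ (Finset.mem_univ i)) a
  have hknot : ∀ i, ¬ (p i : ℤ) ^ (β i + 1) ∣ k := by
    intro i hdvd
    have hsplit : k = (p i:ℤ) ^ (β i) * (a * ∏ j ∈ Finset.univ.erase i, (p j:ℤ) ^ (β j)) := by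
      rw [hk, ← Finset.mul_prod_erase Finset.univ _ (Finset.mem_univ i)]
      ring
    rw [hsplit, pow_succ] at hdvd
    have hcan : (p i:ℤ) ∣ a * ∏ j ∈ Finset.univ.erase i, (p j:ℤ) ^ (β j) :=
      (mul_dvd_mul_iff_left (pow_ne_zero (β i) (hpz i).ne_zero)).mp hdvd
    rcases (hpz i).2.2 _ _ hcan with hda | hdp
    · exact ha i hda
    · obtain ⟨j, hj, hdj⟩ := ((hpz i).dvd_finset_prod_iff _).mp hdp
      have : (p i:ℤ) ∣ (p j:ℤ) := (hpz i).dvd_of_dvd_pow hdj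
      have hij : p i = p j :=
        (Nat.prime_dvd_prime_iff_eq (hp i) (hp j)).mp (Int.natCast_dvd_natCast.mp this)
      have := hinj hij
      rw [Finset.mem_erase] at hj
      exact hj.1 this.symm
  have hcop : ∀ (i j : Fin r), i ≠ j → ∀ (x y : ℕ), IsCoprime ((p i:ℤ)^x) ((p j:ℤ)^y) := by
    intro i j hij x y
    have hc : Nat.Coprime (p i) (p j) :=
      (Nat.coprime_primes (hp i) (hp j)).mpr (fun h => hij (hinj h))
    exact (Nat.Coprime.isCoprime hc).pow
  have hNz : (N:ℤ) = ∏ i, (p i:ℤ) ^ (α i) := by rw [hN]; push_cast; rfl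
  have hcoefN : ∀ j, 1 ≤ j → j ≤ m → (N:ℤ) ∣ (m.choose j : ℤ) * k ^ j := by
    intro j hj1 hjm
    rw [hNz]
    refine Fintype.prod_dvd_of_coprime (fun i i' hii' => hcop i i' hii' _ _) (fun i => ?_)
    have hαsplit : α i = β i + (α i - β i) := by have := hβα i; omega
    rw [hαsplit]
    exact A_int (p i) (β i) (α i - β i) m j (hp i) (hβ1 i)
      (Finset.dvd_prod_of_mem _ (Finset.mem_univ i)) hj1 hjm k (hkdvd i)
  have hmpos : 0 < m := Finset.prod_pos (fun i _ => pow_pos (hp i).pos _)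
  constructor
  · exact ⟨by omega, upper_bound N k m hcoefN⟩
  · rintro t ⟨htpos, ht⟩
    have i0 : Fin r := ⟨0, by omega⟩
    have hq0N : (p i0) ∣ N := by
      have h1 : p i0 ^ α i0 ∣ N := by
        rw [hN]; exact Finset.dvd_prod_of_mem _ (Finset.mem_univ i0)
      exact dvd_trans (dvd_pow_self _ (by have h2 := hβ1 i0; have h3 := hβα i0; omega)) h1
    have hq0k : ((p i0 : ℕ):ℤ) ∣ k :=
      dvd_trans (dvd_pow_self _ (by have h2 := hβ1 i0; omega)) (hkdvd i0)
    have heven : Even t := even_t (p i0) (hp i0).two_le k hq0k t (transfer N (p i0) hq0N k t ht)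
    obtain ⟨s, hs⟩ := heven
    have hts : t = 2 * s := by omega
    have hspos : 0 < s := by omega
    have hper : ∀ i, p i ^ (α i - β i) ∣ s := by
      intro i
      rcases Nat.eq_zero_or_pos (α i - β i) with h0 | hpos
      · rw [h0]; simpa using one_dvd s
      · have hβe : β i + (α i - β i) = α i := by have := hβα i; omega
        have hdN : p i ^ (β i + (α i - β i)) ∣ N := by
          rw [hN, hβe]
          exact Finset.dvd_prod_of_mem _ (Finset.mem_univ i)
        have htrans := transfer N (p i ^ (β i + (α i - β i))) hdN k t ht
        rw [hts] at htrans
        exact per_prime (p i) (β i) (α i - β i) (hp i) (hβ1 i) hpos k (hkdvd i) (hknot i) s htrans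
    have hms : (m:ℤ) ∣ (s:ℤ) := by
      rw [hm]
      push_cast
      refine Fintype.prod_dvd_of_coprime (fun i i' hii' => hcop i i' hii' _ _) (fun i => ?_)
      exact_mod_cast Int.natCast_dvd_natCast.mpr (hper i)
    have hmsn : m ∣ s := Int.natCast_dvd_natCast.mp hms
    have hdvdt : 2*m ∣ t := by rw [hts]; exact mul_dvd_mul_left 2 hmsn
    exact Nat.le_of_dvd htpos hdvdt

theorem part2 (l n : ℕ) (hl : 2 ≤ l) (hn : 2 ≤ n) (N : ℕ) (hN : N = l ^ n) :
    IsLeast {t : ℕ | 0 < t ∧ (Mmat N (l:ℤ) ^ t = 1 ∨ Mmat N (l:ℤ) ^ t = -1)}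
      (2 * l ^ (n-1)) := by
  have hl0 : l ≠ 0 := by omega
  set F := l.primeFactors with hF
  have hFne : F.Nonempty := Nat.nonempty_primeFactors.mpr (by omega)
  set r := F.card with hr
  have hr1 : 1 ≤ r := Finset.card_pos.mpr hFne
  set e : Fin r ≃ {x // x ∈ F} := F.equivFin.symm with he
  set p : Fin r → ℕ := fun i => (e i : ℕ) with hpdef
  set γ : Fin r → ℕ := fun i => l.factorization (p i) with hγdef
  have hp : ∀ i, (p i).Prime := fun i => Nat.prime_of_mem_primeFactors (e i).2
  have hinj : Function.Injective p := fun i j h => e.injective (Subtype.ext h)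
  have hγ1 : ∀ i, 1 ≤ γ i := by
    intro i
    exact Nat.Prime.factorization_pos_of_dvd (hp i) hl0 (Nat.dvd_of_mem_primeFactors (e i).2)
  have hprod : ∏ i, p i ^ γ i = l := by
    have h1 : ∏ i : Fin r, p i ^ γ i
        = ∏ x : {x // x ∈ F}, (x : ℕ) ^ l.factorization (x : ℕ) :=
      Equiv.prod_comp e (fun x : {x // x ∈ F} => (x : ℕ) ^ l.factorization (x : ℕ))
    have h3 : ∏ x : {x // x ∈ F}, (x : ℕ) ^ l.factorization (x : ℕ)
        = ∏ q ∈ F, q ^ l.factorization q :=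
      Finset.prod_coe_sort F (fun q => q ^ l.factorization q)
    have h2 := Nat.factorization_prod_pow_eq_self hl0
    rw [Finsupp.prod, Nat.support_factorization] at h2
    rw [h1, h3]
    exact h2
  -- general power product identity
  have hpow : ∀ c : ℕ, ∏ i, p i ^ (c * γ i) = l ^ c := by
    intro c
    have h1 : ∀ i : Fin r, p i ^ (c * γ i) = (p i ^ γ i) ^ c := by
      intro i
      rw [← pow_mul, mul_comm]
    rw [Finset.prod_congr rfl (fun i _ => h1 i), Finset.prod_pow, hprod]
  have hres := part1 r hr1 p (fun i => n * γ i) γ hp hinj hγ1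
    (fun i => Nat.le_mul_of_pos_left (γ i) (by omega))
    1 (fun i hdvd => by
      have h1 : p i ∣ 1 := by exact_mod_cast hdvd
      have := Nat.dvd_one.mp h1
      have := (hp i).two_le
      omega)
    N (by rw [hN, ← hpow n])
    (l:ℤ) (by
      rw [one_mul]
      have := congrArg (fun x : ℕ => (x : ℤ)) hprod.symm
      push_cast at this
      exact this)
  have hfinal : ∏ i, p i ^ (n * γ i - γ i) = l ^ (n - 1) := by
    have h1 : ∀ i : Fin r, n * γ i - γ i = (n-1) * γ i := by
      intro i
      rw [Nat.sub_mul, one_mul]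
    rw [Finset.prod_congr rfl (fun i _ => by rw [h1 i]), hpow (n-1)]
  rwa [hfinal] at hres

end Stmt19

/-- if N = ∏ pᵢ^αᵢ and k = a·∏ pᵢ^βᵢ with 1 ≤ βᵢ ≤ αᵢ and a divisible
by none of the pᵢ, then the minimal monomial solution size for k over Z/NZ is
2·∏ pᵢ^(αᵢ-βᵢ). In particular for N = l^n (l, n ≥ 2) and k = l it is 2·l^(n-1). -/
theorem stmt_19 :
    (∀ (r : ℕ), 1 ≤ r → ∀ (p α β : Fin r → ℕ),
      (∀ i, (p i).Prime) → Function.Injective p →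
      (∀ i, 1 ≤ β i) → (∀ i, β i ≤ α i) →
      ∀ (a : ℤ), (∀ i, ¬ ((p i : ℤ) ∣ a)) →
      ∀ (N : ℕ), N = ∏ i, p i ^ α i →
      ∀ (k : ℤ), k = a * ∏ i, (p i : ℤ) ^ β i →
      IsLeast {t : ℕ | 0 < t ∧
        ((!![((k : ℤ) : ZMod N), -1; 1, 0] : Matrix (Fin 2) (Fin 2) (ZMod N)) ^ t = 1 ∨
         (!![((k : ℤ) : ZMod N), -1; 1, 0] : Matrix (Fin 2) (Fin 2) (ZMod N)) ^ t = -1)}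
        (2 * ∏ i, p i ^ (α i - β i))) ∧
    (∀ (l n : ℕ), 2 ≤ l → 2 ≤ n → ∀ (N : ℕ), N = l ^ n →
      IsLeast {t : ℕ | 0 < t ∧
        ((!![((l : ℕ) : ZMod N), -1; 1, 0] : Matrix (Fin 2) (Fin 2) (ZMod N)) ^ t = 1 ∨
         (!![((l : ℕ) : ZMod N), -1; 1, 0] : Matrix (Fin 2) (Fin 2) (ZMod N)) ^ t = -1)}
        (2 * l ^ (n - 1))) := by
  constructor
  · intro r hr p α β hp hinj hβ1 hβα a ha N hN k hk
    exact Stmt19.part1 r hr p α β hp hinj hβ1 hβα a ha N hN k hk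
  · intro l n hl hn N hN
    have h := Stmt19.part2 l n hl hn N hN
    have hc : (!![((l : ℕ) : ZMod N), -1; 1, 0] : Matrix (Fin 2) (Fin 2) (ZMod N))
        = Stmt19.Mmat N (l:ℤ) := by
      simp [Stmt19.Mmat]
    rw [hc]
    exact h
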